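/- arXiv:1404.5903 — 4 statements merged into one kernel-verified Lean document; each statement's English description precedes it below -/
import Mathlib

section
/- Let Y be a chi-square random variable with t degrees of freedom. Then for any θ ≥ 1, P(Y/t ≥ θ) ≤ exp(-(t/2)(θ - 1 - log θ)) ≤ exp(-t·α(θ)), where α(θ) = (1/2)(log θ - 1 + 1/θ). -/
open MeasureTheory ProbabilityTheory

noncomputable def alphaFn (θ : ℝ) : ℝ := (Real.log θ - 1 + 1/θ) / 2

/-- The chi-square distribution with `t` degrees of freedom, as a Gamma distribution. -/
noncomputable def chiSquareMeasure (t : ℕ) : Measure ℝ := gammaMeasure ((t : ℝ) / 2) (1 / 2)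

open Real Set in
lemma gamma_tilt (a r s x : ℝ) (hr : 0 < r) (hs : s < r) :
    ENNReal.ofReal (exp (s * x)) * gammaPDF a r x
      = ENNReal.ofReal ((r / (r - s)) ^ a) * gammaPDF a (r - s) x := by
  have hrs : 0 < r - s := by linarith
  rcases lt_or_ge x 0 with hx | hx
  · rw [gammaPDF_of_neg hx, gammaPDF_of_neg hx, mul_zero, mul_zero]
  · rw [gammaPDF_of_nonneg hx, gammaPDF_of_nonneg hx,
      ← ENNReal.ofReal_mul (exp_pos _).le, ← ENNReal.ofReal_mul (by positivity)]
    congr 1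
    have key : (r / (r - s)) ^ a * (r - s) ^ a = r ^ a := by
      rw [← Real.mul_rpow (by positivity) hrs.le, div_mul_cancel₀ _ hrs.ne']
    have hexp : exp (s * x) * exp (-(r * x)) = exp (-((r - s) * x)) := by
      rw [← exp_add]; ring_nf
    calc exp (s * x) * (r ^ a / Gamma a * x ^ (a - 1) * exp (-(r * x)))
        = (r ^ a / Gamma a * x ^ (a - 1)) * (exp (s * x) * exp (-(r * x))) := by ring
      _ = (r / (r - s)) ^ a * ((r - s) ^ a / Gamma a * x ^ (a - 1) * exp (-((r - s) * x))) := by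
          rw [hexp, ← key]; ring

open Real Set in
theorem chiSquare_upper_tail (t : ℕ) (ht : 0 < t) (θ : ℝ) (hθ : 1 ≤ θ) :
    chiSquareMeasure t {y : ℝ | θ ≤ y / (t : ℝ)}
        ≤ ENNReal.ofReal (Real.exp (-((t : ℝ) / 2) * (θ - 1 - Real.log θ))) ∧
    Real.exp (-((t : ℝ) / 2) * (θ - 1 - Real.log θ))
        ≤ Real.exp (-(t : ℝ) * alphaFn θ) := by
  have htR : (0 : ℝ) < t := Nat.cast_pos.mpr ht
  have hθ0 : (0 : ℝ) < θ := lt_of_lt_of_le one_pos hθ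
  constructor
  · -- Chernoff bound
    set a : ℝ := (t : ℝ) / 2 with ha_def
    set s : ℝ := (1 - 1/θ) / 2 with hs_def
    have hs0 : 0 ≤ s := by
      have : 1/θ ≤ 1 := by rw [div_le_one hθ0]; exact hθ
      simp only [hs_def]; linarith
    have hsr : s < 1/2 := by
      have : 0 < 1/θ := by positivity
      simp only [hs_def]; linarith
    have hrs : (1:ℝ)/2 - s = 1/(2*θ) := by
      simp only [hs_def]; field_simp; ring
    set ε : ℝ := θ * t with hε_def
    have hset : {y : ℝ | θ ≤ y / (t : ℝ)} = Ici ε := by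
      ext y; simp only [mem_setOf_eq, mem_Ici, hε_def, le_div_iff₀ htR]
    have hmeas : Measurable fun y : ℝ ↦ ENNReal.ofReal (exp (s * y)) * gammaPDF a (1/2) y :=
      ((measurable_id.const_mul s).exp.ennreal_ofReal).mul
        ((measurable_gammaPDFReal a (1/2)).ennreal_ofReal)
    have step1 : chiSquareMeasure t {y : ℝ | θ ≤ y / (t : ℝ)}
        ≤ ENNReal.ofReal (exp (-(s * ε))) * ∫⁻ y, ENNReal.ofReal (exp (s * y)) * gammaPDF a (1/2) y := by
      rw [hset, chiSquareMeasure, gammaMeasure, withDensity_apply _ measurableSet_Ici]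
      calc ∫⁻ y in Ici ε, gammaPDF a (1/2) y
          ≤ ∫⁻ y in Ici ε, ENNReal.ofReal (exp (s * (y - ε))) * gammaPDF a (1/2) y := by
            refine setLIntegral_mono' measurableSet_Ici fun y hy ↦ ?_
            refine le_mul_of_one_le_left zero_le ?_
            rw [← ENNReal.ofReal_one]
            exact ENNReal.ofReal_le_ofReal (by
              rw [← Real.exp_zero]
              exact Real.exp_le_exp.mpr (mul_nonneg hs0 (by simpa using hy)))
        _ ≤ ∫⁻ y, ENNReal.ofReal (exp (s * (y - ε))) * gammaPDF a (1/2) y :=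
            setLIntegral_le_lintegral _ _
        _ = ENNReal.ofReal (exp (-(s * ε))) * ∫⁻ y, ENNReal.ofReal (exp (s * y)) * gammaPDF a (1/2) y := by
            rw [← lintegral_const_mul _ hmeas]
            congr 1 with y
            rw [← mul_assoc, ← ENNReal.ofReal_mul (exp_pos _).le, ← exp_add]
            ring_nf
    have step2 : ∫⁻ y, ENNReal.ofReal (exp (s * y)) * gammaPDF a (1/2) y
        = ENNReal.ofReal (θ ^ a) := by
      have ha0 : 0 < a := by positivity
      have hr' : (0:ℝ) < 1/2 - s := by linarith
      calc ∫⁻ y, ENNReal.ofReal (exp (s * y)) * gammaPDF a (1/2) y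
          = ∫⁻ y, ENNReal.ofReal (((1:ℝ)/2 / (1/2 - s)) ^ a) * gammaPDF a (1/2 - s) y := by
            congr 1 with y; exact gamma_tilt a (1/2) s y one_half_pos hsr
        _ = ENNReal.ofReal (((1:ℝ)/2 / (1/2 - s)) ^ a) * ∫⁻ y, gammaPDF a (1/2 - s) y := by
            have hg : Measurable (gammaPDF a (1/2 - s)) :=
              (measurable_gammaPDFReal a _).ennreal_ofReal
            rw [lintegral_const_mul _ hg]
        _ = ENNReal.ofReal (θ ^ a) := by
            rw [lintegral_gammaPDF_eq_one ha0 hr', mul_one]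
            congr 2
            rw [hrs]
            field_simp
    rw [step2] at step1
    refine step1.trans (le_of_eq ?_)
    rw [← ENNReal.ofReal_mul (exp_pos _).le]
    rw [Real.rpow_def_of_pos hθ0, ← exp_add]
    congr 2
    have : s * ε = (t:ℝ)/2 * (θ - 1) := by
      simp only [hs_def, hε_def]
      field_simp
    rw [this, ha_def]
    ring
  · -- second inequality
    rw [Real.exp_le_exp, alphaFn]
    have hlog : 2 * Real.log θ ≤ θ - 1/θ := by
      have hx : 0 ≤ Real.log θ := Real.log_nonneg hθ
      have hsinh : Real.log θ ≤ Real.sinh (Real.log θ) := by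
        rcases hx.eq_or_lt with h | h
        · rw [← h]; simp
        · exact (Real.self_lt_sinh_iff.mpr h).le
      rw [Real.sinh_eq, Real.exp_log hθ0, Real.exp_neg, Real.exp_log hθ0] at hsinh
      rw [one_div]
      linarith
    nlinarith [htR]
end

section
/- There exists a universal constant c > 0 such that β(min(2, R)) ≤ c·α(R) for all R ≥ 1, where β(θ) = θ - 1 - log θ and α(θ) = (1/2)(log θ - 1 + 1/θ). -/
noncomputable def betaFn (θ : ℝ) : ℝ := θ - 1 - Real.log θ

lemma log_ge_one_sub_inv {x : ℝ} (hx : 0 < x) : 1 - 1/x ≤ Real.log x := by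
  have h := Real.log_le_sub_one_of_pos (show (0:ℝ) < 1/x by positivity)
  rw [one_div, Real.log_inv] at h
  rw [one_div]
  linarith

lemma g_hasDeriv {x : ℝ} (hx : x ≠ 0) :
    HasDerivAt (fun x : ℝ => 3 * Real.log x - 1 + 2/x - x)
      (3 / x - 2 / x ^ 2 - 1) x := by
  have h1 := (Real.hasDerivAt_log hx).const_mul 3
  have h2 := (hasDerivAt_inv hx).const_mul 2
  have h : HasDerivAt (fun x : ℝ => 3 * Real.log x - 1 + 2/x - x)
      (3 * x⁻¹ + 2 * (-(x ^ 2)⁻¹) - 1) x := by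
    simpa [div_eq_mul_inv, Pi.add_def, Pi.sub_def, id] using ((h1.sub_const 1).add h2).sub (hasDerivAt_id x)
  convert h using 1
  field_simp
  ring

lemma g_mono : MonotoneOn (fun x : ℝ => 3 * Real.log x - 1 + 2/x - x)
    (Set.Icc 1 2) := by
  apply monotoneOn_of_deriv_nonneg (convex_Icc 1 2)
  · intro x hx
    have hx0 : x ≠ 0 := by have := hx.1; intro h; rw [h] at this; linarith
    exact (g_hasDeriv hx0).continuousAt.continuousWithinAt
  · intro x hx
    rw [interior_Icc] at hx
    have hx0 : x ≠ 0 := by have := hx.1; intro h; rw [h] at this; linarith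
    exact (g_hasDeriv hx0).differentiableAt.differentiableWithinAt
  · intro x hx
    rw [interior_Icc] at hx
    have hx1 : 1 < x := hx.1
    have hx2 : x < 2 := hx.2
    have hx0 : x ≠ 0 := by linarith
    rw [(g_hasDeriv hx0).deriv]
    have hkey : 3 / x - 2 / x ^ 2 - 1 = (x - 1) * (2 - x) / x ^ 2 := by
      field_simp
      ring
    rw [hkey]
    have hx2pos : (0:ℝ) < x ^ 2 := by positivity
    apply div_nonneg _ hx2pos.le
    nlinarith

theorem beta_min_two_le_const_mul_alpha :
    ∃ c : ℝ, 0 < c ∧ ∀ R : ℝ, 1 ≤ R → betaFn (min 2 R) ≤ c * alphaFn R := by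
  refine ⟨4, by norm_num, ?_⟩
  intro R hR
  have hR0 : (0:ℝ) < R := by linarith
  rcases le_total R 2 with h2 | h2
  · rw [min_eq_right h2]
    have hg := g_mono (Set.mem_Icc.mpr ⟨le_refl 1, by norm_num⟩)
      (Set.mem_Icc.mpr ⟨hR, h2⟩) hR
    simp only [Real.log_one] at hg
    have h1 : (2:ℝ)/1 = 2 := by norm_num
    rw [h1] at hg
    -- hg : 3 * 0 - 1 + 2 - 1 ≤ 3 * log R - 1 + 2/R - R
    have h2R : (2:ℝ)/R = 2 * (1/R) := by ring
    unfold betaFn alphaFn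
    rw [h2R] at hg
    linarith
  · rw [min_eq_left h2]
    unfold betaFn alphaFn
    have hlog2 : (0.6931471803 : ℝ) < Real.log 2 := Real.log_two_gt_d9
    have hhalf : (0:ℝ) < R / 2 := by linarith
    have hlow := log_ge_one_sub_inv hhalf
    rw [Real.log_div (by linarith : R ≠ 0) two_ne_zero] at hlow
    have hinv : 1 / (R / 2) = 2 / R := by
      field_simp
    rw [hinv] at hlow
    -- hlow : 1 - 2/R ≤ log R - log 2
    have hdiv : (2:ℝ)/R ≤ 1 := by
      rw [div_le_one hR0]; linarith
    have h2R : (2:ℝ)/R = 2 * (1/R) := by ring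
    rw [h2R] at hlow hdiv
    have hlog2' : Real.log 2 ≤ Real.log 2 := le_refl _
    -- goal: 2 - 1 - log 2 ≤ 4 * ((log R - 1 + 1/R)/2)
    linarith
end

section
/- Let 1 > ρ₀ > ρ₁ ≥ 0 and R = (1-ρ₁)/(1-ρ₀). Then α(R) ≤ KL(N(ρ₀, 1-ρ₀²), N(ρ₁, 1-ρ₁²)) ≤ c·α(R) for a universal constant c > 1, where KL denotes the Kullback-Leibler divergence between one-dimensional Gaussians and α(θ) = (1/2)(log θ - 1 + 1/θ). -/
open MeasureTheory ProbabilityTheory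
open MeasureTheory Real Filter
open scoped ENNReal NNReal

/-- Kullback-Leibler divergence `∫ log (dμ/dν) dμ`. -/
noncomputable def klDivReal {X : Type*} [MeasurableSpace X] (μ ν : Measure X) : ℝ :=
  ∫ x, Real.log ((μ.rnDeriv ν x).toReal) ∂μ


lemma hasDerivAt_aux {b : ℝ} (hb : 0 < b) (x : ℝ) :
    HasDerivAt (fun x : ℝ => -(2*b)⁻¹ * Real.exp (-b * x ^ 2)) (x * Real.exp (-b * x ^ 2)) x := by
  have h1 : HasDerivAt (fun x : ℝ => -b * x ^ 2) (-b * (2 * x)) x := by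
    simpa using ((hasDerivAt_pow 2 x).const_mul (-b))
  have h2 := (h1.exp).const_mul (-(2*b)⁻¹)
  refine h2.congr_deriv ?_
  field_simp

lemma int_lin {b : ℝ} (hb : 0 < b) : ∫ x : ℝ, x * Real.exp (-b * x ^ 2) = 0 := by
  have h := integral_neg_eq_self (fun x : ℝ => x * Real.exp (-b * x ^ 2)) (volume : Measure ℝ)
  have h2 : (∫ x : ℝ, (-x) * Real.exp (-b * (-x) ^ 2))
      = ∫ x : ℝ, -(x * Real.exp (-b * x ^ 2)) := by
    congr 1; ext x; rw [neg_pow]; ring_nf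
  rw [h2, integral_neg] at h
  linarith

lemma integrable_sq_exp {b : ℝ} (hb : 0 < b) :
    Integrable (fun x : ℝ => x ^ 2 * Real.exp (-b * x ^ 2)) := by
  have := integrable_rpow_mul_exp_neg_mul_sq hb (s := 2) (by norm_num)
  convert this using 2 with x
  rw [← Real.rpow_natCast x 2]
  norm_num

lemma int_sq {b : ℝ} (hb : 0 < b) :
    ∫ x : ℝ, x ^ 2 * Real.exp (-b * x ^ 2) = Real.sqrt (π / b) / (2 * b) := by
  have hu : ∀ x : ℝ, HasDerivAt (fun y : ℝ => y) 1 x := fun x => hasDerivAt_id x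
  have key := MeasureTheory.integral_mul_deriv_eq_deriv_mul_of_integrable
    (u := fun y : ℝ => y) (u' := fun _ => (1:ℝ))
    (v := fun x : ℝ => -(2*b)⁻¹ * Real.exp (-b * x ^ 2))
    (v' := fun x : ℝ => x * Real.exp (-b * x ^ 2))
    (fun x _ => hu x) (fun x _ => hasDerivAt_aux hb x)
    ?_ ?_ ?_
  · have h2 : ∫ x : ℝ, (1:ℝ) * (-(2*b)⁻¹ * Real.exp (-b * x ^ 2))
        = -(2*b)⁻¹ * Real.sqrt (π / b) := by
      simp only [one_mul]
      rw [integral_const_mul, integral_gaussian]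
    have h3 : (∫ x : ℝ, x * (x * Real.exp (-b * x ^ 2)))
        = ∫ x : ℝ, x ^ 2 * Real.exp (-b * x ^ 2) := by
      congr 1; ext x; ring
    have key' : (∫ x : ℝ, (fun y : ℝ => y) x * (fun x : ℝ => x * Real.exp (-b * x ^ 2)) x)
        = - ∫ x : ℝ, (fun _ : ℝ => (1:ℝ)) x * (fun x : ℝ => -(2*b)⁻¹ * Real.exp (-b * x ^ 2)) x := key
    simp only at key'
    rw [h3, h2] at key'
    rw [key']; ring
  · exact (integrable_sq_exp hb).congr (ae_of_all _ (fun x => by simp [Pi.mul_apply]; ring))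
  · exact ((integrable_exp_neg_mul_sq hb).const_mul (-(2*b)⁻¹)).congr
      (ae_of_all _ (fun x => by simp [Pi.mul_apply]))
  · exact ((integrable_mul_exp_neg_mul_sq hb).const_mul (-(2*b)⁻¹)).congr
      (ae_of_all _ (fun x => by simp [Pi.mul_apply]; ring))

lemma integrable_F {b d c : ℝ} (hb : 0 < b) :
    Integrable (fun y : ℝ => c * Real.exp (-b * y^2) * (y + d)^2) := by
  have h : (fun y : ℝ => c * Real.exp (-b*y^2) * (y+d)^2)
      = fun y => c * (y^2 * Real.exp (-b*y^2)) + (2*d*c) * (y * Real.exp (-b*y^2))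
          + (d^2*c) * Real.exp (-b*y^2) := by ext y; ring
  rw [h]
  exact (((integrable_sq_exp hb).const_mul c).add
    ((integrable_mul_exp_neg_mul_sq hb).const_mul (2*d*c))).add
    ((integrable_exp_neg_mul_sq hb).const_mul (d^2*c))

lemma int_F {b d c : ℝ} (hb : 0 < b) :
    ∫ y : ℝ, c * Real.exp (-b * y^2) * (y + d)^2
      = c * Real.sqrt (π / b) * (1/(2*b) + d^2) := by
  have h : (fun y : ℝ => c * Real.exp (-b*y^2) * (y+d)^2)
      = fun y => (c * (y^2 * Real.exp (-b*y^2)) + (2*d*c) * (y * Real.exp (-b*y^2)))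
          + (d^2*c) * Real.exp (-b*y^2) := by ext y; ring
  have hA : Integrable (fun y : ℝ => c * (y^2 * Real.exp (-b*y^2))) :=
    (integrable_sq_exp hb).const_mul c
  have hB : Integrable (fun y : ℝ => (2*d*c) * (y * Real.exp (-b*y^2))) :=
    (integrable_mul_exp_neg_mul_sq hb).const_mul (2*d*c)
  have hC : Integrable (fun y : ℝ => (d^2*c) * Real.exp (-b*y^2)) :=
    (integrable_exp_neg_mul_sq hb).const_mul (d^2*c)
  have hAB : Integrable (fun y : ℝ => c * (y^2 * Real.exp (-b*y^2))
      + (2*d*c) * (y * Real.exp (-b*y^2))) := hA.add hB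
  rw [h, integral_add hAB hC, integral_add hA hB,
    integral_const_mul, integral_const_mul, integral_const_mul,
    int_sq hb, int_lin hb, integral_gaussian]
  field_simp
  ring

open ProbabilityTheory

lemma pdf_eq (m : ℝ) {v : ℝ} (hv : 0 < v) :
    gaussianPDFReal m v.toNNReal
      = fun x => (Real.sqrt (2*π*v))⁻¹ * Real.exp (-(2*v)⁻¹ * (x - m)^2) := by
  ext x
  rw [gaussianPDFReal, Real.coe_toNNReal v hv.le]
  congr 1
  field_simp

lemma pdf_shift (m q : ℝ) {v : ℝ} (hv : 0 < v) :
    (fun x => gaussianPDFReal m v.toNNReal x * (x - q)^2)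
      = fun x => (fun y => (Real.sqrt (2*π*v))⁻¹ * Real.exp (-(2*v)⁻¹ * y^2) * (y + (m-q))^2)
          (x - m) := by
  ext x
  rw [pdf_eq m hv]
  simp only
  have : x - m + (m - q) = x - q := by ring
  rw [this]

lemma integrable_gauss_sq (m q : ℝ) {v : ℝ} (hv : 0 < v) :
    Integrable (fun x => gaussianPDFReal m v.toNNReal x * (x - q)^2) := by
  rw [pdf_shift m q hv]
  exact (integrable_F (by positivity)).comp_sub_right m

lemma gauss_sq_moment (m q : ℝ) {v : ℝ} (hv : 0 < v) :
    ∫ x, gaussianPDFReal m v.toNNReal x * (x - q)^2 = v + (m - q)^2 := by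
  rw [pdf_shift m q hv]
  rw [integral_sub_right_eq_self
    (fun y => (Real.sqrt (2*π*v))⁻¹ * Real.exp (-(2*v)⁻¹ * y^2) * (y + (m-q))^2) m]
  rw [int_F (by positivity : (0:ℝ) < (2*v)⁻¹)]
  have h1 : π / (2*v)⁻¹ = 2*π*v := by field_simp
  have h2 : Real.sqrt (2*π*v) ≠ 0 := by positivity
  rw [h1]
  rw [show (Real.sqrt (2*π*v))⁻¹ * Real.sqrt (2*π*v) = 1 from inv_mul_cancel₀ h2]
  have h3 : 1/(2*(2*v)⁻¹) = v := by field_simp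
  rw [h3, one_mul]



lemma kl_formula (m₀ m₁ : ℝ) {v₀ v₁ : ℝ} (h0 : 0 < v₀) (h1 : 0 < v₁) :
    klDivReal (gaussianReal m₀ v₀.toNNReal) (gaussianReal m₁ v₁.toNNReal)
      = (Real.log (v₁/v₀) + v₀/v₁ - 1 + (m₀-m₁)^2/v₁) / 2 := by
  have hV₀ : v₀.toNNReal ≠ 0 := by
    simp only [ne_eq, Real.toNNReal_eq_zero, not_le]; exact h0
  have hV₁ : v₁.toNNReal ≠ 0 := by
    simp only [ne_eq, Real.toNNReal_eq_zero, not_le]; exact h1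
  set μ := gaussianReal m₀ v₀.toNNReal with hμdef
  set ν := gaussianReal m₁ v₁.toNNReal with hνdef
  -- rn deriv identification
  have hrn : μ.rnDeriv ν =ᵐ[volume]
      fun x => (gaussianPDF m₁ v₁.toNNReal x)⁻¹ * gaussianPDF m₀ v₀.toNNReal x := by
    rw [hνdef, gaussianReal_of_var_ne_zero m₁ hV₁]
    have h := Measure.rnDeriv_withDensity_right μ volume
      (measurable_gaussianPDF m₁ v₁.toNNReal).aemeasurable
      (ae_of_all _ fun x => (gaussianPDF_pos m₁ hV₁ x).ne')
      (ae_of_all _ fun x => by simp [gaussianPDF])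
    filter_upwards [h, rnDeriv_gaussianReal m₀ v₀.toNNReal] with x hx hx2
    rw [hx]
    simp only [hμdef] at hx2 ⊢
    rw [hx2]
  have hac : μ ≪ volume := gaussianReal_absolutelyContinuous m₀ hV₀
  have hrnμ := hac.ae_eq hrn
  have hlogeq : (fun x => Real.log ((μ.rnDeriv ν x).toReal)) =ᵐ[μ]
      fun x => Real.log (gaussianPDFReal m₀ v₀.toNNReal x / gaussianPDFReal m₁ v₁.toNNReal x) := by
    filter_upwards [hrnμ] with x hx
    rw [hx]
    simp only [gaussianPDF]
    rw [ENNReal.toReal_mul, ENNReal.toReal_inv, ENNReal.toReal_ofReal (gaussianPDFReal_nonneg _ _ _),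
      ENNReal.toReal_ofReal (gaussianPDFReal_nonneg _ _ _), div_eq_mul_inv, mul_comm]
  rw [klDivReal, integral_congr_ae hlogeq]
  -- pointwise log expansion
  have hlog : ∀ x, Real.log (gaussianPDFReal m₀ v₀.toNNReal x / gaussianPDFReal m₁ v₁.toNNReal x)
      = Real.log (v₁/v₀)/2 + (2*v₁)⁻¹ * (x-m₁)^2 - (2*v₀)⁻¹ * (x-m₀)^2 := by
    intro x
    rw [Real.log_div (gaussianPDFReal_pos _ _ _ hV₀).ne' (gaussianPDFReal_pos _ _ _ hV₁).ne',
      pdf_eq m₀ h0, pdf_eq m₁ h1]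
    simp only
    rw [Real.log_mul (by positivity) (Real.exp_ne_zero _),
      Real.log_mul (by positivity) (Real.exp_ne_zero _),
      Real.log_exp, Real.log_exp, Real.log_inv, Real.log_inv,
      Real.log_sqrt (by positivity), Real.log_sqrt (by positivity)]
    have hlv : Real.log (2*π*v₁) - Real.log (2*π*v₀) = Real.log (v₁/v₀) := by
      rw [Real.log_div h1.ne' h0.ne', Real.log_mul (by positivity) h1.ne',
        Real.log_mul (by positivity) h0.ne']
      ring
    linarith [hlv]
  simp only [hlog]
  -- integral over μ
  have hμint : ∀ g : ℝ → ℝ, ∫ x, g x ∂μ = ∫ x, gaussianPDFReal m₀ v₀.toNNReal x * g x := by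
    intro g
    rw [hμdef, gaussianReal_of_var_ne_zero m₀ hV₀]
    have hd : gaussianPDF m₀ v₀.toNNReal
        = fun x => ((gaussianPDFReal m₀ v₀.toNNReal x).toNNReal : ℝ≥0∞) := rfl
    rw [hd, integral_withDensity_eq_integral_smul
      (measurable_gaussianPDFReal m₀ v₀.toNNReal).real_toNNReal g]
    congr 1; ext x
    rw [NNReal.smul_def, smul_eq_mul, Real.coe_toNNReal _ (gaussianPDFReal_nonneg _ _ _)]
  rw [hμint]
  set L := Real.log (v₁/v₀) with hL
  have hI1 : Integrable (fun x => gaussianPDFReal m₀ v₀.toNNReal x * (L/2)) :=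
    (integrable_gaussianPDFReal m₀ v₀.toNNReal).mul_const _
  have hI2 : Integrable (fun x => (2*v₁)⁻¹ * (gaussianPDFReal m₀ v₀.toNNReal x * (x-m₁)^2)) :=
    (integrable_gauss_sq m₀ m₁ h0).const_mul _
  have hI3 : Integrable (fun x => (2*v₀)⁻¹ * (gaussianPDFReal m₀ v₀.toNNReal x * (x-m₀)^2)) :=
    (integrable_gauss_sq m₀ m₀ h0).const_mul _
  have hI12 : Integrable (fun x => gaussianPDFReal m₀ v₀.toNNReal x * (L/2)
      + (2*v₁)⁻¹ * (gaussianPDFReal m₀ v₀.toNNReal x * (x-m₁)^2)) := hI1.add hI2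
  have hsplit : (fun x => gaussianPDFReal m₀ v₀.toNNReal x
        * (L/2 + (2*v₁)⁻¹ * (x-m₁)^2 - (2*v₀)⁻¹ * (x-m₀)^2))
      = fun x => (gaussianPDFReal m₀ v₀.toNNReal x * (L/2)
        + (2*v₁)⁻¹ * (gaussianPDFReal m₀ v₀.toNNReal x * (x-m₁)^2))
        - (2*v₀)⁻¹ * (gaussianPDFReal m₀ v₀.toNNReal x * (x-m₀)^2) := by
    ext x; ring
  rw [hsplit, integral_sub hI12 hI3, integral_add hI1 hI2,
    integral_mul_const, integral_const_mul, integral_const_mul,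
    integral_gaussianPDFReal_eq_one m₀ hV₀, gauss_sq_moment m₀ m₁ h0, gauss_sq_moment m₀ m₀ h0]
  field_simp
  ring

lemma ineq_A1 {t : ℝ} (ht : 1 ≤ t) : t - 1 - Real.log t ≤ (t-1)^2 := by
  have h0 : (0:ℝ) < t := by linarith
  have h := Real.one_sub_inv_le_log_of_pos h0
  have h2 : t - 1 - (1 - t⁻¹) ≤ (t-1)^2 := by
    have : t - 1 - (1 - t⁻¹) = (t-1)^2/t := by field_simp
    rw [this]
    apply div_le_of_le_mul₀ (by positivity) (by positivity)
    nlinarith [sq_nonneg (t-1)]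
  linarith

lemma ineq_A2 {s : ℝ} (hs : 0 < s) (hs1 : s ≤ 1) : (1-s)^2/2 ≤ s - 1 - Real.log s := by
  set f : ℝ → ℝ := fun t => t - 1 - Real.log t - (1-t)^2/2 with hf
  have hder : ∀ t : ℝ, 0 < t → HasDerivAt f (1 - t⁻¹ + (1 - t)) t := by
    intro t ht
    have h1 : HasDerivAt (fun t : ℝ => t - 1) 1 t := (hasDerivAt_id t).sub_const 1
    have h2 : HasDerivAt Real.log t⁻¹ t := Real.hasDerivAt_log ht.ne'
    have h3 : HasDerivAt (fun t : ℝ => (1-t)^2/2) (-(1-t)) t := by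
      have h4 := (((hasDerivAt_id t).const_sub 1).pow 2).div_const 2
      refine h4.congr_deriv ?_
      simp; ring
    have := (h1.sub h2).sub h3
    refine this.congr_deriv ?_
    ring
  have hanti : AntitoneOn f (Set.Icc s 1) := by
    apply antitoneOn_of_deriv_nonpos (convex_Icc s 1)
    · apply ContinuousOn.sub
      apply ContinuousOn.sub
      · exact (continuous_id.sub continuous_const).continuousOn
      · exact Real.continuousOn_log.mono (fun x hx => by
          simp only [Set.mem_compl_iff, Set.mem_singleton_iff]
          have := hx.1; intro h; rw [h] at this; linarith)
      · exact (Continuous.div_const (by continuity) 2).continuousOn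
    · intro x hx
      rw [interior_Icc] at hx
      exact (hder x (lt_trans hs hx.1)).differentiableAt.differentiableWithinAt
    · intro x hx
      rw [interior_Icc] at hx
      have hx0 : 0 < x := lt_trans hs hx.1
      rw [(hder x hx0).deriv]
      have h5 : 1 - x⁻¹ + (1 - x) = -((1-x)^2/x) := by field_simp; ring
      rw [h5, neg_nonpos]
      positivity
  have h1 : f s ≥ f 1 := hanti (Set.mem_Icc.mpr ⟨le_refl s, hs1⟩) (Set.mem_Icc.mpr ⟨hs1, le_refl 1⟩) hs1
  have h2 : f 1 = 0 := by simp [hf]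
  rw [h2] at h1
  simp only [hf] at h1
  linarith


theorem kl_gaussians_comparable_alpha :
    ∃ c : ℝ, 1 < c ∧
      ∀ ρ₀ ρ₁ : ℝ, 0 ≤ ρ₁ → ρ₁ < ρ₀ → ρ₀ < 1 →
        alphaFn ((1 - ρ₁) / (1 - ρ₀))
            ≤ klDivReal (gaussianReal ρ₀ (Real.toNNReal (1 - ρ₀^2)))
                (gaussianReal ρ₁ (Real.toNNReal (1 - ρ₁^2))) ∧
        klDivReal (gaussianReal ρ₀ (Real.toNNReal (1 - ρ₀^2)))
            (gaussianReal ρ₁ (Real.toNNReal (1 - ρ₁^2)))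
          ≤ c * alphaFn ((1 - ρ₁) / (1 - ρ₀)) := by
  refine ⟨3, by norm_num, ?_⟩
  intro ρ₀ ρ₁ hρ₁nn hlt h01
  have ha : 0 < 1 - ρ₀ := by linarith
  have hb : 0 < 1 - ρ₁ := by linarith
  have hbp : 0 < 1 + ρ₁ := by linarith
  have hap : 0 < 1 + ρ₀ := by linarith
  have hv₀ : 0 < 1 - ρ₀^2 := by nlinarith
  have hv₁ : 0 < 1 - ρ₁^2 := by nlinarith
  rw [kl_formula ρ₀ ρ₁ hv₀ hv₁]
  set R := (1 - ρ₁) / (1 - ρ₀) with hRdef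
  have hR0 : 0 < R := by positivity
  set Y := (1 + ρ₀) / (1 + ρ₁) with hYdef
  have hY0 : 0 < Y := div_pos hap hbp
  have hY1 : 1 ≤ Y := by rw [hYdef, le_div_iff₀ hbp]; linarith
  set s := (1 - ρ₀) / (1 - ρ₁) with hsdef
  have hs0 : 0 < s := by positivity
  have hs1 : s ≤ 1 := by rw [hsdef, div_le_one hb]; linarith
  have hsR : 1/R = s := by rw [hRdef, hsdef]; rw [one_div_div]
  have hlogs : Real.log s = - Real.log R := by
    rw [hsdef, hRdef, Real.log_div ha.ne' hb.ne', Real.log_div hb.ne' ha.ne']; ring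
  have hlogv : Real.log ((1-ρ₁^2)/(1-ρ₀^2)) = Real.log R - Real.log Y := by
    have hv : (1-ρ₁^2)/(1-ρ₀^2) = R/Y := by
      rw [hRdef, hYdef]
      have n1 : (1:ℝ) - ρ₀^2 ≠ 0 := hv₀.ne'
      have n2 : (1:ℝ) - ρ₀ ≠ 0 := ha.ne'
      have n3 : (1:ℝ) + ρ₀ ≠ 0 := hap.ne'
      have n4 : (1:ℝ) + ρ₁ ≠ 0 := hbp.ne'
      field_simp
      ring
    rw [hv, Real.log_div hR0.ne' hY0.ne']
  have hrest : (1-ρ₀^2)/(1-ρ₁^2) + (ρ₀-ρ₁)^2/(1-ρ₁^2) - 1/R = Y - 1 := by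
    rw [hRdef, hYdef]; field_simp; ring
  have hYs : Y - 1 ≤ 1 - s := by
    have e1 : Y - 1 = (ρ₀-ρ₁)/(1+ρ₁) := by rw [hYdef]; field_simp; ring
    have e2 : 1 - s = (ρ₀-ρ₁)/(1-ρ₁) := by rw [hsdef]; field_simp; ring
    rw [e1, e2]
    gcongr
    · linarith
  have hfY : Y - 1 - Real.log Y ≤ (Y-1)^2 := ineq_A1 hY1
  have hsq : (Y-1)^2 ≤ (1-s)^2 := by
    apply pow_le_pow_left₀ (by linarith) hYs
  have hA2 : (1-s)^2/2 ≤ s - 1 - Real.log s := ineq_A2 hs0 hs1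
  have hlow : Real.log Y ≤ Y - 1 := Real.log_le_sub_one_of_pos hY0
  constructor
  · simp only [alphaFn]
    linarith [hrest, hlogv, hlow]
  · simp only [alphaFn]
    linarith [hrest, hlogv, hfY, hsq, hA2, hlogs, hsR]
end

section
/- Let 0 ≤ σ < 1 and let (X₁ₛ, X₂ₛ), s = 1,…,t be i.i.d. bivariate Gaussian pairs with zero means, unit variances and correlation σ. Define the difference-based estimator σ̂_t = 1 - (1/t)Σₛ (X₁ₛ - X₂ₛ)²/2. Then for any θ ≥ 1, P(1 - σ̂_t ≥ θ(1-σ)) ≤ exp(-t·α(θ)) and P(1 - σ̂_t ≤ (1-σ)/θ) ≤ exp(-t·α(θ)), where α(θ) = (1/2)(log θ - 1 + 1/θ). -/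
open MeasureTheory ProbabilityTheory

/-- The centered bivariate Gaussian distribution with unit variances and correlation `σ`. -/
noncomputable def bivGaussian (σ : ℝ) : Measure (ℝ × ℝ) :=
  Measure.map (fun p : ℝ × ℝ => (p.1, σ * p.1 + Real.sqrt (1 - σ^2) * p.2))
    ((gaussianReal 0 1).prod (gaussianReal 0 1))

/-- `1 - σ̂_t`, where `σ̂_t` is the difference-based correlation estimator. -/
noncomputable def oneMinusEst {t : ℕ} (x : Fin t → ℝ × ℝ) : ℝ :=
  (1 / (t : ℝ)) * ∑ s, ((x s).1 - (x s).2)^2 / 2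

open Real

/-! ### Auxiliary lemmas -/

lemma lintegralGaussQuad (A B C : ℝ) (hA : 0 < A) :
    ∫⁻ v : ℝ, ENNReal.ofReal (Real.exp (-(A*v^2) + B*v + C)) =
      ENNReal.ofReal (Real.sqrt (π/A) * Real.exp (C + B^2/(4*A))) := by
  have hkey : ∀ v : ℝ, -(A*v^2) + B*v + C = -(A * (v - B/(2*A))^2) + (C + B^2/(4*A)) := by
    intro v; field_simp; ring
  simp_rw [hkey, Real.exp_add]
  have hint : Integrable (fun v : ℝ => Real.exp (-(A * (v - B/(2*A))^2))) := by
    have := (integrable_exp_neg_mul_sq hA).comp_sub_right (B/(2*A))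
    simpa [neg_mul] using this
  rw [← ofReal_integral_eq_lintegral_ofReal (hint.mul_const _)
      (ae_of_all _ fun v => by positivity)]
  congr 1
  rw [integral_mul_const,
    integral_sub_right_eq_self (fun v : ℝ => Real.exp (-(A * v^2))) (B/(2*A))]
  simp_rw [← neg_mul]
  rw [integral_gaussian]

lemma lintegralStdGauss (q L D : ℝ) (hq : q < 1) :
    ∫⁻ v, ENNReal.ofReal (Real.exp (q*v^2/2 + L*v + D)) ∂(gaussianReal 0 1) =
      ENNReal.ofReal ((Real.sqrt (1-q))⁻¹ * Real.exp (D + L^2/(2*(1-q)))) := by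
  rw [gaussianReal_of_var_ne_zero _ one_ne_zero,
    lintegral_withDensity_eq_lintegral_mul _ (measurable_gaussianPDF 0 1)
      (by fun_prop)]
  have hpdf : ∀ v : ℝ, gaussianPDF 0 1 v
      = ENNReal.ofReal ((Real.sqrt (2*π))⁻¹ * Real.exp (-(v^2/2))) := by
    intro v
    simp [gaussianPDF, gaussianPDFReal, neg_div]
  have hcomb : ∀ v : ℝ,
      gaussianPDF 0 1 v * ENNReal.ofReal (Real.exp (q*v^2/2 + L*v + D))
      = ENNReal.ofReal ((Real.sqrt (2*π))⁻¹) *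
        ENNReal.ofReal (Real.exp (-(((1-q)/2)*v^2) + L*v + D)) := by
    intro v
    rw [hpdf v, ← ENNReal.ofReal_mul (by positivity), ← ENNReal.ofReal_mul (by positivity)]
    congr 1
    rw [mul_assoc, ← Real.exp_add]
    congr 2
    ring
  simp only [Pi.mul_apply]
  simp_rw [hcomb]
  rw [lintegral_const_mul _ (by fun_prop), lintegralGaussQuad _ _ _ (by linarith),
    ← ENNReal.ofReal_mul (by positivity)]
  congr 1
  have h2π : (0:ℝ) < 2*π := by positivity
  have h1q : (0:ℝ) < 1 - q := by linarith
  rw [show π / ((1-q)/2) = (2*π) / (1-q) from by field_simp,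
      Real.sqrt_div h2π.le,
      show D + L^2/(4*((1-q)/2)) = D + L^2/(2*(1-q)) from by ring]
  have hs : Real.sqrt (2*π) ≠ 0 := by positivity
  have hs2 : Real.sqrt (1-q) ≠ 0 := by positivity
  field_simp

lemma lintegralBiv (σ lam : ℝ) (hσ0 : 0 ≤ σ) (hσ1 : σ < 1)
    (h1 : lam * (1 - σ^2) < 1) (h2 : 0 < 1 - 2*lam*(1-σ)) :
    ∫⁻ p : ℝ×ℝ, ENNReal.ofReal (Real.exp (lam * ((p.1 - p.2)^2/2))) ∂(bivGaussian σ) =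
      ENNReal.ofReal ((Real.sqrt (1 - 2*lam*(1-σ)))⁻¹) := by
  set s : ℝ := Real.sqrt (1 - σ^2) with hs
  have hs2 : s^2 = 1 - σ^2 := Real.sq_sqrt (by nlinarith)
  have hT : Measurable (fun p : ℝ × ℝ => (p.1, σ * p.1 + s * p.2)) := by fun_prop
  have hf : Measurable (fun p : ℝ×ℝ => ENNReal.ofReal (Real.exp (lam * ((p.1 - p.2)^2/2)))) := by
    fun_prop
  rw [bivGaussian, lintegral_map hf hT]
  rw [lintegral_prod _ (by fun_prop)]
  have hq1 : lam * (1 - σ^2) < 1 := h1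
  have hexp : ∀ u v : ℝ, lam * ((u - (σ*u + s*v))^2/2)
      = (lam*(1-σ^2))*v^2/2 + (-(lam*(1-σ)*s*u))*v + (lam*(1-σ)^2)*u^2/2 := by
    intro u v
    linear_combination (lam * v^2/2) * hs2
  have hinner : ∀ u : ℝ,
      (∫⁻ v, ENNReal.ofReal (Real.exp (lam * ((u - (σ*u + s*v))^2/2))) ∂(gaussianReal 0 1))
      = ENNReal.ofReal ((Real.sqrt (1-lam*(1-σ^2)))⁻¹) *
        ENNReal.ofReal (Real.exp ((lam*(1-σ)^2/(1-lam*(1-σ^2)))*u^2/2)) := by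
    intro u
    simp_rw [hexp u]
    rw [lintegralStdGauss _ _ _ hq1, ENNReal.ofReal_mul (by positivity)]
    congr 2
    have h1q : (0:ℝ) < 1 - lam*(1-σ^2) := by linarith
    have hL2 : (-(lam*(1-σ)*s*u))^2 = lam^2*(1-σ)^2*(1-σ^2)*u^2 := by
      have h' : (-(lam*(1-σ)*s*u))^2 = lam^2*(1-σ)^2*u^2*(s^2) := by ring
      rw [h', hs2]; ring
    rw [hL2]
    field_simp
    ring
  simp_rw [hinner]
  rw [lintegral_const_mul _ (by fun_prop)]
  have hq2 : lam*(1-σ)^2/(1-lam*(1-σ^2)) < 1 := by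
    have h1q : (0:ℝ) < 1 - lam*(1-σ^2) := by linarith
    rw [div_lt_one h1q]
    nlinarith
  have := lintegralStdGauss (lam*(1-σ)^2/(1-lam*(1-σ^2))) 0 0 hq2
  norm_num at this
  rw [this]
  have h1q : (0:ℝ) < 1 - lam*(1-σ^2) := by linarith
  rw [← ENNReal.ofReal_mul (by positivity)]
  congr 1
  rw [← mul_inv, ← Real.sqrt_mul (by linarith)]
  congr 2
  field_simp
  ring

lemma lintegral_pi_prod {α : Type*} [MeasurableSpace α] (ν : Measure α) [SigmaFinite ν]
    [IsProbabilityMeasure ν] (f : α → ENNReal) (hf : Measurable f) :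
    ∀ t : ℕ, ∫⁻ x : Fin t → α, ∏ i, f (x i) ∂(Measure.pi fun _ => ν) = (∫⁻ y, f y ∂ν) ^ t := by
  intro t
  induction t with
  | zero => simp
  | succ n ih =>
    have hmp := measurePreserving_piFinSuccAbove (fun _ : Fin (n+1) => ν) 0
    have hg : Measurable (fun z : α × (Fin n → α) => f z.1 * ∏ i, f (z.2 i)) := by
      fun_prop
    calc ∫⁻ x : Fin (n+1) → α, ∏ i, f (x i) ∂(Measure.pi fun _ => ν)
        = ∫⁻ x : Fin (n+1) → α, f ((MeasurableEquiv.piFinSuccAbove (fun _ => α) 0 x).1) *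
            ∏ i, f ((MeasurableEquiv.piFinSuccAbove (fun _ => α) 0 x).2 i)
            ∂(Measure.pi fun _ => ν) := by
          apply lintegral_congr
          intro x
          rw [Fin.prod_univ_succ]
          congr 1
      _ = ∫⁻ z : α × (Fin n → α), f z.1 * ∏ i, f (z.2 i) ∂(ν.prod (Measure.pi fun _ => ν)) := by
          exact hmp.lintegral_comp hg
      _ = (∫⁻ y, f y ∂ν) * (∫⁻ y, f y ∂ν) ^ n := by
          rw [lintegral_prod_mul (f := f) (g := fun y : Fin n → α => ∏ i, f (y i))
            hf.aemeasurable
            (Finset.measurable_prod Finset.univ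
              (fun i _ => hf.comp (measurable_pi_apply i))).aemeasurable, ih]
      _ = (∫⁻ y, f y ∂ν) ^ (n+1) := by ring

lemma markov_exp {α : Type*} [MeasurableSpace α] (μ : Measure α) (f : α → ℝ)
    (hf : Measurable f) (E : Set α) (c : ℝ) (hE : ∀ x ∈ E, c ≤ f x) :
    μ E ≤ ENNReal.ofReal (Real.exp (-c)) * ∫⁻ x, ENNReal.ofReal (Real.exp (f x)) ∂μ := by
  set I := ∫⁻ x, ENNReal.ofReal (Real.exp (f x)) ∂μ with hI
  have hmono : μ E ≤ μ {x | ENNReal.ofReal (Real.exp c) ≤ ENNReal.ofReal (Real.exp (f x))} := by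
    apply measure_mono
    intro x hx
    exact ENNReal.ofReal_le_ofReal (Real.exp_le_exp.2 (hE x hx))
  have hmark := mul_meas_ge_le_lintegral₀
    (μ := μ) (f := fun x => ENNReal.ofReal (Real.exp (f x)))
    (by fun_prop) (ENNReal.ofReal (Real.exp c))
  have hne : ENNReal.ofReal (Real.exp c) ≠ 0 := by
    simp [ENNReal.ofReal_eq_zero, not_le, Real.exp_pos]
  have hnt : ENNReal.ofReal (Real.exp c) ≠ ⊤ := ENNReal.ofReal_ne_top
  have h2 : μ {x | ENNReal.ofReal (Real.exp c) ≤ ENNReal.ofReal (Real.exp (f x))}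
      ≤ (ENNReal.ofReal (Real.exp c))⁻¹ * I := by
    rw [← ENNReal.div_eq_inv_mul, ENNReal.le_div_iff_mul_le (Or.inl hne) (Or.inl hnt), mul_comm]
    exact hmark
  refine hmono.trans (h2.trans_eq ?_)
  congr 1
  rw [Real.exp_neg, ENNReal.ofReal_inv_of_pos (Real.exp_pos c)]

lemma self_le_sinh {r : ℝ} (hr : 0 ≤ r) : r ≤ Real.sinh r := by
  have hmono : MonotoneOn (fun x => Real.sinh x - x) (Set.Ici 0) := by
    apply monotoneOn_of_deriv_nonneg (convex_Ici 0)
    · exact (Real.continuous_sinh.sub continuous_id).continuousOn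
    · exact ((Real.differentiable_sinh.sub differentiable_id).differentiableOn)
    · intro x _
      have hd : HasDerivAt (fun x => Real.sinh x - x) (Real.cosh x - 1) x :=
        (Real.hasDerivAt_sinh x).sub (hasDerivAt_id x)
      rw [hd.deriv]
      have := Real.one_le_cosh x
      linarith
  have h := hmono (Set.self_mem_Ici) (Set.mem_Ici.2 hr) hr
  simp only [Real.sinh_zero] at h
  linarith

lemma two_log_le (θ : ℝ) (hθ : 1 ≤ θ) : 2 * Real.log θ ≤ θ - 1/θ := by
  have hθ0 : (0:ℝ) < θ := by linarith
  have hu1 : (1:ℝ) ≤ Real.sqrt θ := by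
    rw [show (1:ℝ) = Real.sqrt 1 from (Real.sqrt_one).symm]
    exact Real.sqrt_le_sqrt hθ
  have hu0 : (0:ℝ) < Real.sqrt θ := by linarith
  have hu2 : Real.sqrt θ ^ 2 = θ := Real.sq_sqrt hθ0.le
  have hlog : Real.log (Real.sqrt θ) = Real.log θ / 2 := Real.log_sqrt hθ0.le
  have hls : 0 ≤ Real.log (Real.sqrt θ) := Real.log_nonneg hu1
  have hsinh := self_le_sinh hls
  rw [Real.sinh_log hu0] at hsinh
  have hinv : Real.sqrt θ * (Real.sqrt θ)⁻¹ = 1 := mul_inv_cancel₀ hu0.ne'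
  have hinvθ : 1/θ = ((Real.sqrt θ)⁻¹)^2 := by
    rw [← hu2]; field_simp; rw [Real.sqrt_sq hu0.le]
  rw [hlog] at hsinh
  rw [hinvθ]
  nlinarith [sq_nonneg (Real.sqrt θ - (Real.sqrt θ)⁻¹),
    sq_nonneg (Real.sqrt θ + (Real.sqrt θ)⁻¹ - 2), inv_pos.2 hu0]

/-- The sum used in the estimator. -/
noncomputable def Ssum {t : ℕ} (x : Fin t → ℝ × ℝ) : ℝ := ∑ s, ((x s).1 - (x s).2)^2 / 2

lemma Ssum_measurable {t : ℕ} : Measurable (Ssum (t := t)) :=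
  Finset.measurable_sum _ (fun s _ => by fun_prop)

instance bivGaussian_isProb (σ : ℝ) : IsProbabilityMeasure (bivGaussian σ) := by
  rw [bivGaussian]
  exact Measure.isProbabilityMeasure_map (by fun_prop)

lemma tailBound (σ : ℝ) (hσ0 : 0 ≤ σ) (hσ1 : σ < 1) (t : ℕ) (lam c : ℝ)
    (E : Set (Fin t → ℝ×ℝ)) (hA : lam * (1-σ^2) < 1) (hB : 0 < 1-2*lam*(1-σ))
    (hE : ∀ x ∈ E, c ≤ lam * Ssum x) :
    (Measure.pi fun _ : Fin t => bivGaussian σ) E ≤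
      ENNReal.ofReal (Real.exp (-c) * ((Real.sqrt (1-2*lam*(1-σ)))⁻¹)^t) := by
  have h1 := markov_exp (Measure.pi fun _ : Fin t => bivGaussian σ)
    (fun x => lam * Ssum x) (Ssum_measurable.const_mul lam) E c hE
  have hrw : (fun x : Fin t → ℝ×ℝ => ENNReal.ofReal (Real.exp (lam * Ssum x)))
      = fun x => ∏ i,
        (fun p : ℝ×ℝ => ENNReal.ofReal (Real.exp (lam * ((p.1-p.2)^2/2)))) (x i) := by
    funext x
    rw [Ssum, Finset.mul_sum, Real.exp_sum,
      ENNReal.ofReal_prod_of_nonneg (fun i _ => (Real.exp_pos _).le)]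
  rw [hrw, lintegral_pi_prod (bivGaussian σ)
      (fun p : ℝ×ℝ => ENNReal.ofReal (Real.exp (lam * ((p.1-p.2)^2/2)))) (by fun_prop) t,
    lintegralBiv σ lam hσ0 hσ1 hA hB,
    ← ENNReal.ofReal_pow (by positivity),
    ← ENNReal.ofReal_mul (Real.exp_pos _).le] at h1
  exact h1

theorem diff_estimator_concentration (σ : ℝ) (hσ0 : 0 ≤ σ) (hσ1 : σ < 1)
    (t : ℕ) (ht : 0 < t) (θ : ℝ) (hθ : 1 ≤ θ) :
    (Measure.pi fun _ : Fin t => bivGaussian σ) {x | θ * (1 - σ) ≤ oneMinusEst x}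
        ≤ ENNReal.ofReal (Real.exp (-(t : ℝ) * alphaFn θ)) ∧
    (Measure.pi fun _ : Fin t => bivGaussian σ) {x | oneMinusEst x ≤ (1 - σ) / θ}
        ≤ ENNReal.ofReal (Real.exp (-(t : ℝ) * alphaFn θ)) := by
  have hθ0 : (0:ℝ) < θ := by linarith
  have h1σ : (0:ℝ) < 1 - σ := by linarith
  have ht' : (0:ℝ) < (t:ℝ) := by exact_mod_cast ht
  have hoe : ∀ x : Fin t → ℝ×ℝ, oneMinusEst x = (1/(t:ℝ)) * Ssum x := fun x => rfl
  have hinvθ : 1/θ ≤ 1 := by rw [div_le_one hθ0]; linarith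
  have hinvθ0 : (0:ℝ) < 1/θ := by positivity
  have sqrtθ : Real.sqrt θ = Real.exp (Real.log θ / 2) := by
    rw [← Real.log_sqrt hθ0.le, Real.exp_log (Real.sqrt_pos.2 hθ0)]
  have hkey := two_log_le θ hθ
  constructor
  · -- upper tail
    set lam := (1 - 1/θ)/(2*(1-σ)) with hlam
    have hlam0 : 0 ≤ lam := by
      apply div_nonneg (by linarith) (by linarith)
    have hB : 1 - 2*lam*(1-σ) = 1/θ := by
      rw [hlam]; field_simp; ring
    have hA : lam * (1-σ^2) < 1 := by
      have heq : lam * (1-σ^2) = (1-1/θ)*(1+σ)/2 := by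
        rw [hlam]; field_simp; ring
      rw [heq]; nlinarith
    have hE : ∀ x ∈ {x : Fin t → ℝ×ℝ | θ * (1 - σ) ≤ oneMinusEst x},
        lam * ((t:ℝ)*(θ*(1-σ))) ≤ lam * Ssum x := by
      intro x hx
      have hx' : θ * (1-σ) ≤ (1/(t:ℝ)) * Ssum x := by rw [← hoe x]; exact hx
      have : (t:ℝ)*(θ*(1-σ)) ≤ Ssum x := by
        calc (t:ℝ)*(θ*(1-σ)) ≤ (t:ℝ)*((1/(t:ℝ)) * Ssum x) := by
              exact mul_le_mul_of_nonneg_left hx' ht'.le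
          _ = Ssum x := by field_simp
      exact mul_le_mul_of_nonneg_left this hlam0
    have h := tailBound σ hσ0 hσ1 t lam ((lam * ((t:ℝ)*(θ*(1-σ))))) _ hA (by rw [hB]; positivity) hE
    rw [hB] at h
    refine h.trans (ENNReal.ofReal_le_ofReal ?_)
    have hc : lam * ((t:ℝ)*(θ*(1-σ))) = (t:ℝ)*(θ-1)/2 := by
      rw [hlam]; field_simp
    rw [hc, show (1/θ : ℝ) = θ⁻¹ from one_div θ, Real.sqrt_inv, inv_inv, sqrtθ,
      ← Real.exp_nat_mul, ← Real.exp_add]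
    apply Real.exp_le_exp.2
    rw [alphaFn]
    have hmul := mul_le_mul_of_nonneg_left hkey ht'.le
    nlinarith [hmul]
  · -- lower tail
    set lam := -((θ-1)/(2*(1-σ))) with hlam
    have hlam0 : lam ≤ 0 := by
      rw [hlam, neg_nonpos]
      apply div_nonneg (by linarith) (by linarith)
    have hB : 1 - 2*lam*(1-σ) = θ := by
      rw [hlam]; field_simp; ring
    have hA : lam * (1-σ^2) < 1 := by
      have h2 : 0 ≤ 1 - σ^2 := by nlinarith
      nlinarith
    have hE : ∀ x ∈ {x : Fin t → ℝ×ℝ | oneMinusEst x ≤ (1-σ)/θ},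
        lam * ((t:ℝ)*((1-σ)/θ)) ≤ lam * Ssum x := by
      intro x hx
      have hx' : (1/(t:ℝ)) * Ssum x ≤ (1-σ)/θ := by rw [← hoe x]; exact hx
      have : Ssum x ≤ (t:ℝ)*((1-σ)/θ) := by
        calc Ssum x = (t:ℝ)*((1/(t:ℝ)) * Ssum x) := by field_simp
          _ ≤ (t:ℝ)*((1-σ)/θ) := mul_le_mul_of_nonneg_left hx' ht'.le
      exact mul_le_mul_of_nonpos_left this hlam0
    have h := tailBound σ hσ0 hσ1 t lam ((lam * ((t:ℝ)*((1-σ)/θ)))) _ hA (by rw [hB]; linarith) hE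
    rw [hB] at h
    refine h.trans (ENNReal.ofReal_le_ofReal ?_)
    have hc : lam * ((t:ℝ)*((1-σ)/θ)) = -((t:ℝ)*(1-1/θ)/2) := by
      rw [hlam]; field_simp
    rw [hc, sqrtθ, ← Real.exp_neg, ← Real.exp_nat_mul, ← Real.exp_add]
    apply Real.exp_le_exp.2
    rw [alphaFn]
    ring_nf
    nlinarith [ht'.le]
end
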